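/- Define a_n = sum over 5-tuples of non-negative integers (p1,...,p5) summing to n of (n!/(p1!...p5!))^2. Then for all n ≥ 3, n^4*a_n - (35n^4 - 70n^3 + 63n^2 - 28n + 5)*a_{n-1} + (n-1)^2*(259*(n-1)^2 + 26)*a_{n-2} - 225*(n-1)^2*(n-2)^2*a_{n-3} = 0. -/

import Mathlib

open PowerSeries Finset

set_option maxHeartbeats 2000000

noncomputable def myD (u : PowerSeries ℚ) : PowerSeries ℚ :=
  PowerSeries.mk fun n => (n : ℚ) * PowerSeries.coeff n u

lemma coeff_myD (n : ℕ) (u : PowerSeries ℚ) : coeff n (myD u) = (n : ℚ) * coeff n u := by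
  simp [myD]

lemma myD_add (u v : PowerSeries ℚ) : myD (u + v) = myD u + myD v := by
  apply PowerSeries.ext; intro n
  simp [myD, mul_add]

lemma myD_mul (u v : PowerSeries ℚ) : myD (u * v) = myD u * v + u * myD v := by
  apply PowerSeries.ext; intro n
  rw [coeff_myD, map_add, coeff_mul, coeff_mul, coeff_mul, Finset.mul_sum, ← Finset.sum_add_distrib]
  refine Finset.sum_congr rfl fun p hp => ?_
  rw [Finset.HasAntidiagonal.mem_antidiagonal] at hp
  rw [coeff_myD, coeff_myD, ← hp]
  push_cast
  ring

lemma myD_neg (u : PowerSeries ℚ) : myD (-u) = -myD u := by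
  apply PowerSeries.ext; intro n
  simp [myD]

lemma myD_C (r : ℚ) : myD (C r) = 0 := by
  apply PowerSeries.ext; intro n
  cases n <;> simp [myD, coeff_C]

lemma myD_one : myD 1 = 0 := by
  rw [← map_one (C (R := ℚ))]; exact myD_C 1

lemma myD_ofNat (k : ℕ) [k.AtLeastTwo] : myD (no_index (OfNat.ofNat k)) = 0 := by
  rw [← map_ofNat (C (R := ℚ)) k]; exact myD_C _

lemma myD_X : myD X = X := by
  apply PowerSeries.ext; intro n
  rw [coeff_myD, coeff_X]
  split_ifs with h
  · simp [h]
  · simp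

lemma myD_pow2 (u : PowerSeries ℚ) : myD (u^2) = 2 * u * myD u := by
  rw [show u^2 = u * u from sq u, myD_mul]; ring

lemma myD_pow3 (u : PowerSeries ℚ) : myD (u^3) = 3 * u^2 * myD u := by
  rw [show u^3 = u^2 * u from pow_succ u 2, myD_mul, myD_pow2]; ring

lemma myD_pow4 (u : PowerSeries ℚ) : myD (u^4) = 4 * u^3 * myD u := by
  rw [show u^4 = u^3 * u from pow_succ u 3, myD_mul, myD_pow3]; ring

lemma myD_pow5 (u : PowerSeries ℚ) : myD (u^5) = 5 * u^4 * myD u := by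
  rw [show u^5 = u^4 * u from pow_succ u 4, myD_mul, myD_pow4]; ring

noncomputable def yy : PowerSeries ℚ := PowerSeries.mk fun k => 1 / ((k.factorial : ℚ))^2

noncomputable def zz : PowerSeries ℚ := PowerSeries.mk fun k => (k : ℚ) / ((k.factorial : ℚ))^2

lemma coeff_yy (k : ℕ) : coeff k yy = 1 / ((k.factorial : ℚ))^2 := coeff_mk _ _

lemma coeff_zz (k : ℕ) : coeff k zz = (k : ℚ) / ((k.factorial : ℚ))^2 := coeff_mk _ _

lemma myD_yy : myD yy = zz := by
  apply PowerSeries.ext; intro n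
  rw [coeff_myD, coeff_yy, coeff_zz]
  ring

lemma myD_zz : myD zz = X * yy := by
  apply PowerSeries.ext; intro n
  cases n with
  | zero => simp [coeff_myD]
  | succ k =>
    rw [coeff_myD, coeff_zz, coeff_succ_X_mul, coeff_yy]
    have h : (k.factorial : ℚ) ≠ 0 := Nat.cast_ne_zero.mpr k.factorial_ne_zero
    have h2 : ((k+1 : ℕ) : ℚ) ≠ 0 := by positivity
    push_cast [Nat.factorial_succ]
    field_simp
noncomputable def E0 : PowerSeries ℚ := yy^5

noncomputable def E1 : PowerSeries ℚ := myD E0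

noncomputable def E2 : PowerSeries ℚ := myD E1

noncomputable def E3 : PowerSeries ℚ := myD E2

noncomputable def E4 : PowerSeries ℚ := myD E3

noncomputable def E5 : PowerSeries ℚ := myD E4

noncomputable def E6 : PowerSeries ℚ := myD E5

noncomputable def E7 : PowerSeries ℚ := myD E6

noncomputable def E8 : PowerSeries ℚ := myD E7

noncomputable def E9 : PowerSeries ℚ := myD E8

noncomputable def E10 : PowerSeries ℚ := myD E9

lemma chain0 : E0 = yy^5 := rfl

lemma chain1 : E1 = 5 * yy^4 * zz := by
  rw [show E1 = myD E0 from rfl, chain0]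
  simp only [myD_add, myD_mul, myD_neg, myD_ofNat, myD_one, myD_X, myD_yy, myD_zz, myD_pow2, myD_pow3, myD_pow4, myD_pow5]
  try ring

lemma chain2 : E2 = 20 * yy^3 * zz^2 + 5 * X * yy^5 := by
  rw [show E2 = myD E1 from rfl, chain1]
  simp only [myD_add, myD_mul, myD_neg, myD_ofNat, myD_one, myD_X, myD_yy, myD_zz, myD_pow2, myD_pow3, myD_pow4, myD_pow5]
  try ring

lemma chain3 : E3 = 60 * yy^2 * zz^3 + 65 * X * yy^4 * zz + 5 * X * yy^5 := by
  rw [show E3 = myD E2 from rfl, chain2]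
  simp only [myD_add, myD_mul, myD_neg, myD_ofNat, myD_one, myD_X, myD_yy, myD_zz, myD_pow2, myD_pow3, myD_pow4, myD_pow5]
  try ring

lemma chain4 : E4 = 120 * yy * zz^4 + 440 * X * yy^3 * zz^2 + 90 * X * yy^4 * zz + 5 * X * yy^5 + 65 * X^2 * yy^5 := by
  rw [show E4 = myD E3 from rfl, chain3]
  simp only [myD_add, myD_mul, myD_neg, myD_ofNat, myD_one, myD_X, myD_yy, myD_zz, myD_pow2, myD_pow3, myD_pow4, myD_pow5]
  try ring

lemma chain5 : E5 = 120 * zz^5 + 1800 * X * yy^2 * zz^3 + 800 * X * yy^3 * zz^2 + 115 * X * yy^4 * zz + 5 * X * yy^5 + 1205 * X^2 * yy^4 * zz + 220 * X^2 * yy^5 := by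
  rw [show E5 = myD E4 from rfl, chain4]
  simp only [myD_add, myD_mul, myD_neg, myD_ofNat, myD_one, myD_X, myD_yy, myD_zz, myD_pow2, myD_pow3, myD_pow4, myD_pow5]
  try ring

lemma chain6 : E6 = 4200 * X * yy * zz^4 + 4200 * X * yy^2 * zz^3 + 1260 * X * yy^3 * zz^2 + 140 * X * yy^4 * zz + 5 * X * yy^5 + 10220 * X^2 * yy^3 * zz^2 + 5110 * X^2 * yy^4 * zz + 555 * X^2 * yy^5 + 1205 * X^3 * yy^5 := by
  rw [show E6 = myD E5 from rfl, chain5]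
  simp only [myD_add, myD_mul, myD_neg, myD_ofNat, myD_one, myD_X, myD_yy, myD_zz, myD_pow2, myD_pow3, myD_pow4, myD_pow5]
  try ring

lemma chain7 : E7 = 4200 * X * zz^5 + 12600 * X * yy * zz^4 + 7980 * X * yy^2 * zz^3 + 1820 * X * yy^3 * zz^2 + 165 * X * yy^4 * zz + 5 * X * yy^5 + 47460 * X^2 * yy^2 * zz^3 + 53480 * X^2 * yy^3 * zz^2 + 15515 * X^2 * yy^4 * zz + 1250 * X^2 * yy^5 + 26465 * X^3 * yy^4 * zz + 8725 * X^3 * yy^5 := by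
  rw [show E7 = myD E6 from rfl, chain6]
  simp only [myD_add, myD_mul, myD_neg, myD_ofNat, myD_one, myD_X, myD_yy, myD_zz, myD_pow2, myD_pow3, myD_pow4, myD_pow5]
  try ring

lemma chain8 : E8 = 16800 * X * zz^5 + 28560 * X * yy * zz^4 + 13440 * X * yy^2 * zz^3 + 2480 * X * yy^3 * zz^2 + 190 * X * yy^4 * zz + 5 * X * yy^5 + 115920 * X^2 * yy * zz^4 + 305760 * X^2 * yy^2 * zz^3 + 192960 * X^2 * yy^3 * zz^2 + 40920 * X^2 * yy^4 * zz + 2665 * X^2 * yy^5 + 248240 * X^3 * yy^3 * zz^2 + 229980 * X^3 * yy^4 * zz + 41690 * X^3 * yy^5 + 26465 * X^4 * yy^5 := by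
  rw [show E8 = myD E7 from rfl, chain7]
  simp only [myD_add, myD_mul, myD_neg, myD_ofNat, myD_one, myD_X, myD_yy, myD_zz, myD_pow2, myD_pow3, myD_pow4, myD_pow5]
  try ring

lemma chain9 : E9 = 45360 * X * zz^5 + 55440 * X * yy * zz^4 + 20880 * X * yy^2 * zz^3 + 3240 * X * yy^3 * zz^2 + 215 * X * yy^4 * zz + 5 * X * yy^5 + 115920 * X^2 * zz^5 + 927360 * X^2 * yy * zz^4 + 1304640 * X^2 * yy^2 * zz^3 + 589920 * X^2 * yy^3 * zz^2 + 100125 * X^2 * yy^4 * zz + 5520 * X^2 * yy^5 + 1208400 * X^3 * yy^2 * zz^3 + 2581920 * X^3 * yy^3 * zz^2 + 1284310 * X^3 * yy^4 * zz + 165990 * X^3 * yy^5 + 628805 * X^4 * yy^4 * zz + 335840 * X^4 * yy^5 := by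
  rw [show E9 = myD E8 from rfl, chain8]
  simp only [myD_add, myD_mul, myD_neg, myD_ofNat, myD_one, myD_X, myD_yy, myD_zz, myD_pow2, myD_pow3, myD_pow4, myD_pow5]
  try ring

lemma chain10 : E10 = 100800 * X * zz^5 + 97200 * X * yy * zz^4 + 30600 * X * yy^2 * zz^3 + 4100 * X * yy^3 * zz^2 + 240 * X * yy^4 * zz + 5 * X * yy^5 + 1159200 * X^2 * zz^5 + 4690800 * X^2 * yy * zz^4 + 4600800 * X^2 * yy^2 * zz^3 + 1642980 * X^2 * yy^3 * zz^2 + 234330 * X^2 * yy^4 * zz + 11255 * X^2 * yy^5 + 2996400 * X^3 * yy * zz^4 + 15080400 * X^3 * yy^2 * zz^3 + 16796920 * X^3 * yy^3 * zz^2 + 5862720 * X^3 * yy^4 * zz + 598095 * X^3 * yy^5 + 6140420 * X^4 * yy^3 * zz^2 + 9358260 * X^4 * yy^4 * zz + 2627670 * X^4 * yy^5 + 628805 * X^5 * yy^5 := by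
  rw [show E10 = myD E9 from rfl, chain9]
  simp only [myD_add, myD_mul, myD_neg, myD_ofNat, myD_one, myD_X, myD_yy, myD_zz, myD_pow2, myD_pow3, myD_pow4, myD_pow5]
  try ring

lemma cof1 (n : ℕ) : coeff n E1 = ((n:ℕ):ℚ)^1 * coeff n E0 := by
  rw [show E1 = myD E0 from rfl, coeff_myD]
  ring

lemma cof2 (n : ℕ) : coeff n E2 = ((n:ℕ):ℚ)^2 * coeff n E0 := by
  rw [show E2 = myD E1 from rfl, coeff_myD, cof1]
  ring

lemma cof3 (n : ℕ) : coeff n E3 = ((n:ℕ):ℚ)^3 * coeff n E0 := by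
  rw [show E3 = myD E2 from rfl, coeff_myD, cof2]
  ring

lemma cof4 (n : ℕ) : coeff n E4 = ((n:ℕ):ℚ)^4 * coeff n E0 := by
  rw [show E4 = myD E3 from rfl, coeff_myD, cof3]
  ring

lemma cof5 (n : ℕ) : coeff n E5 = ((n:ℕ):ℚ)^5 * coeff n E0 := by
  rw [show E5 = myD E4 from rfl, coeff_myD, cof4]
  ring

lemma cof6 (n : ℕ) : coeff n E6 = ((n:ℕ):ℚ)^6 * coeff n E0 := by
  rw [show E6 = myD E5 from rfl, coeff_myD, cof5]
  ring

lemma cof7 (n : ℕ) : coeff n E7 = ((n:ℕ):ℚ)^7 * coeff n E0 := by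
  rw [show E7 = myD E6 from rfl, coeff_myD, cof6]
  ring

lemma cof8 (n : ℕ) : coeff n E8 = ((n:ℕ):ℚ)^8 * coeff n E0 := by
  rw [show E8 = myD E7 from rfl, coeff_myD, cof7]
  ring

lemma cof9 (n : ℕ) : coeff n E9 = ((n:ℕ):ℚ)^9 * coeff n E0 := by
  rw [show E9 = myD E8 from rfl, coeff_myD, cof8]
  ring

lemma cof10 (n : ℕ) : coeff n E10 = ((n:ℕ):ℚ)^10 * coeff n E0 := by
  rw [show E10 = myD E9 from rfl, coeff_myD, cof9]
  ring

lemma gc0 (n : ℕ) : coeff n ((-3360) * X * zz^5 + 1440 * X * yy * zz^4 + 1080 * X * yy^2 * zz^3 + 100 * X * yy^3 * zz^2 + 463680 * X^2 * zz^5 + 633600 * X^2 * yy * zz^4 + 178320 * X^2 * yy^2 * zz^3 + 11060 * X^2 * yy^3 * zz^2 + (-200) * X^2 * yy^4 * zz + 2996400 * X^3 * yy * zz^4 + 7830000 * X^3 * yy^2 * zz^3 + 4532520 * X^3 * yy^3 * zz^2 + 829020 * X^3 * yy^4 * zz + 44245 * X^3 * yy^5 + 6140420 * X^4 * yy^3 *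 zz^2 + 5585430 * X^4 * yy^4 * zz + 956675 * X^4 * yy^5 + 628805 * X^5 * yy^5) = ((4:ℚ) * ((n:ℕ):ℚ)^6 + ((-12:ℚ)) * ((n:ℕ):ℚ)^7 + (13:ℚ) * ((n:ℕ):ℚ)^8 + ((-6:ℚ)) * ((n:ℕ):ℚ)^9 + (1:ℚ) * ((n:ℕ):ℚ)^10) * coeff n E0 := by
  have h : ((-3360) * X * zz^5 + 1440 * X * yy * zz^4 + 1080 * X * yy^2 * zz^3 + 100 * X * yy^3 * zz^2 + 463680 * X^2 * zz^5 + 633600 * X^2 * yy * zz^4 + 178320 * X^2 * yy^2 * zz^3 + 11060 * X^2 * yy^3 * zz^2 + (-200) * X^2 * yy^4 * zz + 2996400 * X^3 * yy * zz^4 + 7830000 * X^3 * yy^2 * zz^3 + 4532520 * X^3 * yy^3 * zz^2 + 829020 * X^3 * yy^4 * zz + 44245 * X^3 * yy^5 + 6140420 * X^4 * yy^3 * zz^2 + 5585430 * X^4 * yy^4 * zz + 956675 * X^4 * yy^5 + 628805 * X^5 * yy^5 : PowerSeries ℚ) = C (4) * E6 + C (-12) * E7 + C (13) * E8 + C (-6)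 * E9 + C (1) * E10 := by
    rw [chain6, chain7, chain8, chain9, chain10]
    simp only [map_ofNat, map_neg, map_one]
    ring
  rw [h]
  simp only [map_add, coeff_C_mul, cof6, cof7, cof8, cof9, cof10]
  ring

lemma gc1 (n : ℕ) : coeff n (3360 * zz^5 + (-1440) * yy * zz^4 + (-1080) * yy^2 * zz^3 + (-100) * yy^3 * zz^2 + (-588000) * X * zz^5 + (-823200) * X * yy * zz^4 + (-243600) * X * yy^2 * zz^3 + (-16760) * X * yy^3 * zz^2 + 200 * X * yy^4 * zz + (-4057200) * X^2 * yy * zz^4 + (-10701600) * X^2 * yy^2 * zz^3 + (-6324360) * X^2 * yy^3 * zz^2 + (-1183840) * X^2 * yy^4 * zz + (-64585) * X^2 * yy^5 + (-8688400) * X^3 * yy^3 * zz^2 + (-8049300) * X^3 * yy^4 * zz + (-1408540) * X^3 * yy^5 + (-926275) * X^4 * yy^5) = (((-5:ℚ)) * ((n:ℕ):ℚ)^2 + ((-18:ℚ)) * ((n:ℕ):ℚ)^3 + ((-12:ℚ)) * ((n:ℕ):ℚ)^4 + (28:ℚ) * ((n:ℕ):ℚ)^5 + (42:ℚ) * ((n:ℕ):ℚ)^6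 + ((-35:ℚ)) * ((n:ℕ):ℚ)^8) * coeff n E0 := by
  have h : (3360 * zz^5 + (-1440) * yy * zz^4 + (-1080) * yy^2 * zz^3 + (-100) * yy^3 * zz^2 + (-588000) * X * zz^5 + (-823200) * X * yy * zz^4 + (-243600) * X * yy^2 * zz^3 + (-16760) * X * yy^3 * zz^2 + 200 * X * yy^4 * zz + (-4057200) * X^2 * yy * zz^4 + (-10701600) * X^2 * yy^2 * zz^3 + (-6324360) * X^2 * yy^3 * zz^2 + (-1183840) * X^2 * yy^4 * zz + (-64585) * X^2 * yy^5 + (-8688400) * X^3 * yy^3 * zz^2 + (-8049300) * X^3 * yy^4 * zz + (-1408540) * X^3 * yy^5 + (-926275) * X^4 * yy^5 : PowerSeries ℚ) = C (-5) * E2 + C (-18) * E3 + C (-12) * E4 + C (28) * E5 + C (42) * E6 + C (-35) * E8 := by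
    rw [chain2, chain3, chain4, chain5, chain6, chain8]
    simp only [map_ofNat, map_neg, map_one]
    ring
  rw [h]
  simp only [map_add, coeff_C_mul, cof2, cof3, cof4, cof5, cof6, cof8]
  ring

lemma gc2 (n : ℕ) : coeff n (124320 * zz^5 + 189600 * yy * zz^4 + 65280 * yy^2 * zz^3 + 5700 * yy^3 * zz^2 + 1087800 * X * yy * zz^4 + 2952600 * X * yy^2 * zz^3 + 1850340 * X * yy^3 * zz^2 + 368320 * X * yy^4 * zz + 21240 * X * yy^5 + 2646980 * X^2 * yy^3 * zz^2 + 2571870 * X^2 * yy^4 * zz + 474365 * X^2 * yy^5 + 312095 * X^3 * yy^5) = ((285:ℚ) * ((n:ℕ):ℚ)^2 + (1088:ℚ) * ((n:ℕ):ℚ)^3 + (1580:ℚ) * ((n:ℕ):ℚ)^4 + (1036:ℚ) * ((n:ℕ):ℚ)^5 + (259:ℚ) * ((n:ℕ):ℚ)^6) * coeff n E0 := by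
  have h : (124320 * zz^5 + 189600 * yy * zz^4 + 65280 * yy^2 * zz^3 + 5700 * yy^3 * zz^2 + 1087800 * X * yy * zz^4 + 2952600 * X * yy^2 * zz^3 + 1850340 * X * yy^3 * zz^2 + 368320 * X * yy^4 * zz + 21240 * X * yy^5 + 2646980 * X^2 * yy^3 * zz^2 + 2571870 * X^2 * yy^4 * zz + 474365 * X^2 * yy^5 + 312095 * X^3 * yy^5 : PowerSeries ℚ) = C (285) * E2 + C (1088) * E3 + C (1580) * E4 + C (1036) * E5 + C (259) * E6 := by
    rw [chain2, chain3, chain4, chain5, chain6]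
    simp only [map_ofNat, map_neg, map_one]
    ring
  rw [h]
  simp only [map_add, coeff_C_mul, cof2, cof3, cof4, cof5, cof6]
  ring

lemma gc3 (n : ℕ) : coeff n ((-27000) * yy * zz^4 + (-81000) * yy^2 * zz^3 + (-58500) * yy^3 * zz^2 + (-13500) * yy^4 * zz + (-900) * yy^5 + (-99000) * X * yy^3 * zz^2 + (-108000) * X * yy^4 * zz + (-22500) * X * yy^5 + (-14625) * X^2 * yy^5) = (((-900:ℚ)) + ((-2700:ℚ)) * ((n:ℕ):ℚ) + ((-2925:ℚ)) * ((n:ℕ):ℚ)^2 + ((-1350:ℚ)) * ((n:ℕ):ℚ)^3 + ((-225:ℚ)) * ((n:ℕ):ℚ)^4) * coeff n E0 := by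
  have h : ((-27000) * yy * zz^4 + (-81000) * yy^2 * zz^3 + (-58500) * yy^3 * zz^2 + (-13500) * yy^4 * zz + (-900) * yy^5 + (-99000) * X * yy^3 * zz^2 + (-108000) * X * yy^4 * zz + (-22500) * X * yy^5 + (-14625) * X^2 * yy^5 : PowerSeries ℚ) = C (-900) * E0 + C (-2700) * E1 + C (-2925) * E2 + C (-1350) * E3 + C (-225) * E4 := by
    rw [chain0, chain1, chain2, chain3, chain4]
    simp only [map_ofNat, map_neg, map_one]
    ring
  rw [h]
  simp only [map_add, coeff_C_mul, cof1, cof2, cof3, cof4]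
  ring

lemma main0 : ((-3360) * X * zz^5 + 1440 * X * yy * zz^4 + 1080 * X * yy^2 * zz^3 + 100 * X * yy^3 * zz^2 + 463680 * X^2 * zz^5 + 633600 * X^2 * yy * zz^4 + 178320 * X^2 * yy^2 * zz^3 + 11060 * X^2 * yy^3 * zz^2 + (-200) * X^2 * yy^4 * zz + 2996400 * X^3 * yy * zz^4 + 7830000 * X^3 * yy^2 * zz^3 + 4532520 * X^3 * yy^3 * zz^2 + 829020 * X^3 * yy^4 * zz + 44245 * X^3 * yy^5 + 6140420 * X^4 * yy^3 * zz^2 + 5585430 * X^4 * yy^4 * zz + 956675 * X^4 * yy^5 + 628805 * X^5 * yy^5) + X * (3360 * zz^5 + (-1440) * yy * zz^4 + (-1080) * yy^2 * zz^3 + (-100) * yy^3 * zz^2 + (-588000) * X * zz^5 + (-823200) * X * yy * zz^4 + (-243600) * X * yy^2 * zz^3 + (-16760) * X * yy^3 * zz^2 + 200 * X * yy^4 * zz + (-4057200) * X^2 * yy * zz^4 + (-10701600) * X^2 * yy^2 * zz^3 + (-6324360) * X^2 * yy^3 * zz^2 + (-1183840) * X^2 * yy^4 * zz + (-64585) * X^2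 * yy^5 + (-8688400) * X^3 * yy^3 * zz^2 + (-8049300) * X^3 * yy^4 * zz + (-1408540) * X^3 * yy^5 + (-926275) * X^4 * yy^5) + X^2 * (124320 * zz^5 + 189600 * yy * zz^4 + 65280 * yy^2 * zz^3 + 5700 * yy^3 * zz^2 + 1087800 * X * yy * zz^4 + 2952600 * X * yy^2 * zz^3 + 1850340 * X * yy^3 * zz^2 + 368320 * X * yy^4 * zz + 21240 * X * yy^5 + 2646980 * X^2 * yy^3 * zz^2 + 2571870 * X^2 * yy^4 * zz + 474365 * X^2 * yy^5 + 312095 * X^3 * yy^5) + X^3 * ((-27000) * yy * zz^4 + (-81000) * yy^2 * zz^3 + (-58500) * yy^3 * zz^2 + (-13500) * yy^4 * zz + (-900) * yy^5 + (-99000) * X * yy^3 * zz^2 + (-108000) * X * yy^4 * zz + (-22500) * X * yy^5 + (-14625) * X^2 * yy^5) = (0 : PowerSeries ℚ) := by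
  ring

lemma keyrec (m : ℕ) :
    ((4:ℚ) * (((m+3):ℕ):ℚ)^6 + ((-12:ℚ)) * (((m+3):ℕ):ℚ)^7 + (13:ℚ) * (((m+3):ℕ):ℚ)^8 + ((-6:ℚ)) * (((m+3):ℕ):ℚ)^9 + (1:ℚ) * (((m+3):ℕ):ℚ)^10) * coeff (m+3) E0
      + (((-5:ℚ)) * (((m+2):ℕ):ℚ)^2 + ((-18:ℚ)) * (((m+2):ℕ):ℚ)^3 + ((-12:ℚ)) * (((m+2):ℕ):ℚ)^4 + (28:ℚ) * (((m+2):ℕ):ℚ)^5 + (42:ℚ) * (((m+2):ℕ):ℚ)^6 + ((-35:ℚ)) * (((m+2):ℕ):ℚ)^8) * coeff (m+2) E0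
      + ((285:ℚ) * (((m+1):ℕ):ℚ)^2 + (1088:ℚ) * (((m+1):ℕ):ℚ)^3 + (1580:ℚ) * (((m+1):ℕ):ℚ)^4 + (1036:ℚ) * (((m+1):ℕ):ℚ)^5 + (259:ℚ) * (((m+1):ℕ):ℚ)^6) * coeff (m+1) E0
      + (((-900:ℚ)) + ((-2700:ℚ)) * ((m:ℕ):ℚ) + ((-2925:ℚ)) * ((m:ℕ):ℚ)^2 + ((-1350:ℚ)) * ((m:ℕ):ℚ)^3 + ((-225:ℚ)) * ((m:ℕ):ℚ)^4) * coeff m E0 = 0 := by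
  have h := congrArg (coeff (m+3)) main0
  rw [map_zero, map_add, map_add, map_add] at h
  have hx1 : coeff (m+3) (X * (3360 * zz^5 + (-1440) * yy * zz^4 + (-1080) * yy^2 * zz^3 + (-100) * yy^3 * zz^2 + (-588000) * X * zz^5 + (-823200) * X * yy * zz^4 + (-243600) * X * yy^2 * zz^3 + (-16760) * X * yy^3 * zz^2 + 200 * X * yy^4 * zz + (-4057200) * X^2 * yy * zz^4 + (-10701600) * X^2 * yy^2 * zz^3 + (-6324360) * X^2 * yy^3 * zz^2 + (-1183840) * X^2 * yy^4 * zz + (-64585) * X^2 * yy^5 + (-8688400) * X^3 * yy^3 * zz^2 + (-8049300) * X^3 * yy^4 * zz + (-1408540) * X^3 * yy^5 + (-926275) * X^4 * yy^5)) = coeff (m+2) (3360 * zz^5 + (-1440) * yy * zz^4 + (-1080) * yy^2 * zz^3 + (-100) * yy^3 * zz^2 + (-588000) * X * zz^5 + (-823200) * X * yy * zz^4 + (-243600) * X * yy^2 * zz^3 + (-16760) * X * yy^3 * zz^2 + 200 * X * yy^4 * zz + (-4057200) * X^2 * yy * zz^4 + (-10701600) * X^2 * yy^2 * zz^3 + (-6324360)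 * X^2 * yy^3 * zz^2 + (-1183840) * X^2 * yy^4 * zz + (-64585) * X^2 * yy^5 + (-8688400) * X^3 * yy^3 * zz^2 + (-8049300) * X^3 * yy^4 * zz + (-1408540) * X^3 * yy^5 + (-926275) * X^4 * yy^5) := by
    rw [show m+3 = (m+2)+1 from rfl, coeff_succ_X_mul]
  have hx2 : coeff (m+3) (X^2 * (124320 * zz^5 + 189600 * yy * zz^4 + 65280 * yy^2 * zz^3 + 5700 * yy^3 * zz^2 + 1087800 * X * yy * zz^4 + 2952600 * X * yy^2 * zz^3 + 1850340 * X * yy^3 * zz^2 + 368320 * X * yy^4 * zz + 21240 * X * yy^5 + 2646980 * X^2 * yy^3 * zz^2 + 2571870 * X^2 * yy^4 * zz + 474365 * X^2 * yy^5 + 312095 * X^3 * yy^5)) = coeff (m+1) (124320 * zz^5 + 189600 * yy * zz^4 + 65280 * yy^2 * zz^3 + 5700 * yy^3 * zz^2 + 1087800 * X * yy * zz^4 + 2952600 * X * yy^2 * zz^3 + 1850340 * X * yy^3 * zz^2 + 368320 * X * yy^4 * zz + 21240 * X * yy^5 + 2646980 * X^2 * yy^3 * zz^2 + 2571870 * X^2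 * yy^4 * zz + 474365 * X^2 * yy^5 + 312095 * X^3 * yy^5) := by
    rw [show m+3 = (m+1)+2 from rfl, coeff_X_pow_mul]
  have hx3 : coeff (m+3) (X^3 * ((-27000) * yy * zz^4 + (-81000) * yy^2 * zz^3 + (-58500) * yy^3 * zz^2 + (-13500) * yy^4 * zz + (-900) * yy^5 + (-99000) * X * yy^3 * zz^2 + (-108000) * X * yy^4 * zz + (-22500) * X * yy^5 + (-14625) * X^2 * yy^5)) = coeff m ((-27000) * yy * zz^4 + (-81000) * yy^2 * zz^3 + (-58500) * yy^3 * zz^2 + (-13500) * yy^4 * zz + (-900) * yy^5 + (-99000) * X * yy^3 * zz^2 + (-108000) * X * yy^4 * zz + (-22500) * X * yy^5 + (-14625) * X^2 * yy^5) := by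
    rw [coeff_X_pow_mul]
  rw [hx1, hx2, hx3, gc0, gc1, gc2, gc3] at h
  exact h
lemma coeff_y5 (f : ℕ → ℤ)
    (hf : ∀ n : ℕ, f n = ∑ x ∈ Finset.HasAntidiagonal.antidiagonal n, ∑ y ∈ Finset.HasAntidiagonal.antidiagonal x.2,
      ∑ z ∈ Finset.HasAntidiagonal.antidiagonal y.2, ∑ w ∈ Finset.HasAntidiagonal.antidiagonal z.2,
        ((Nat.multinomial Finset.univ ![x.1, y.1, z.1, w.1, w.2] : ℤ)) ^ 2)
    (k : ℕ) :
    ((f k : ℤ) : ℚ) = ((k.factorial : ℚ))^2 * coeff k E0 := by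
  rw [hf k]
  push_cast
  rw [show (E0 : PowerSeries ℚ) = yy*(yy*(yy*(yy*yy))) from by rw [chain0]; ring]
  simp only [coeff_mul, coeff_yy, Finset.mul_sum]
  refine Finset.sum_congr rfl fun a ha => ?_
  refine Finset.sum_congr rfl fun b hb => ?_
  refine Finset.sum_congr rfl fun c hc => ?_
  refine Finset.sum_congr rfl fun d hd => ?_
  rw [Finset.HasAntidiagonal.mem_antidiagonal] at ha hb hc hd
  have spec := Nat.multinomial_spec (Finset.univ) ![a.1, b.1, c.1, d.1, d.2]
  rw [Fin.prod_univ_five, Fin.sum_univ_five] at spec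
  simp only [Matrix.cons_val_zero, Matrix.cons_val_one, Matrix.head_cons, Matrix.cons_val_two,
    Matrix.tail_cons, Matrix.cons_val_three, Matrix.cons_val_four, Matrix.head_fin_const] at spec
  have hk : a.1 + b.1 + c.1 + d.1 + d.2 = k := by omega
  rw [hk] at spec
  have spec' : ((a.1.factorial : ℚ)) * (b.1.factorial : ℚ) * (c.1.factorial : ℚ) *
      (d.1.factorial : ℚ) * (d.2.factorial : ℚ) *
      (Nat.multinomial Finset.univ ![a.1, b.1, c.1, d.1, d.2] : ℚ) = (k.factorial : ℚ) := by
    exact_mod_cast congrArg (Nat.cast : ℕ → ℚ) spec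
  have n1 : (a.1.factorial : ℚ) ≠ 0 := Nat.cast_ne_zero.mpr (Nat.factorial_ne_zero _)
  have n2 : (b.1.factorial : ℚ) ≠ 0 := Nat.cast_ne_zero.mpr (Nat.factorial_ne_zero _)
  have n3 : (c.1.factorial : ℚ) ≠ 0 := Nat.cast_ne_zero.mpr (Nat.factorial_ne_zero _)
  have n4 : (d.1.factorial : ℚ) ≠ 0 := Nat.cast_ne_zero.mpr (Nat.factorial_ne_zero _)
  have n5 : (d.2.factorial : ℚ) ≠ 0 := Nat.cast_ne_zero.mpr (Nat.factorial_ne_zero _)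
  rw [← spec']
  field_simp

theorem recurrence_N5_ones (f : ℕ → ℤ)
    (hf : ∀ n : ℕ, f n = ∑ x ∈ Finset.HasAntidiagonal.antidiagonal n, ∑ y ∈ Finset.HasAntidiagonal.antidiagonal x.2,
      ∑ z ∈ Finset.HasAntidiagonal.antidiagonal y.2, ∑ w ∈ Finset.HasAntidiagonal.antidiagonal z.2,
        ((Nat.multinomial Finset.univ ![x.1, y.1, z.1, w.1, w.2] : ℤ)) ^ 2) :
    ∀ n : ℕ, 3 ≤ n →
      (n : ℤ) ^ 4 * f n
        - (35 * (n : ℤ) ^ 4 - 70 * (n : ℤ) ^ 3 + 63 * (n : ℤ) ^ 2 - 28 * (n : ℤ) + 5) * f (n - 1)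
        + ((n : ℤ) - 1) ^ 2 * (259 * ((n : ℤ) - 1) ^ 2 + 26) * f (n - 2)
        - 225 * ((n : ℤ) - 1) ^ 2 * ((n : ℤ) - 2) ^ 2 * f (n - 3) = 0 := by
  intro n hn
  obtain ⟨m, rfl⟩ : ∃ m, n = m + 3 := ⟨n - 3, by omega⟩
  rw [show m + 3 - 1 = m + 2 from by omega, show m + 3 - 2 = m + 1 from by omega,
    show m + 3 - 3 = m from by omega]
  have key := keyrec m
  have e3 := coeff_y5 f hf (m+3)
  have e2 := coeff_y5 f hf (m+2)
  have e1 := coeff_y5 f hf (m+1)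
  have e0 := coeff_y5 f hf m
  have F3 : ((m+3).factorial : ℚ) = ((m:ℚ)+3) * ((m:ℚ)+2) * ((m:ℚ)+1) * (m.factorial : ℚ) := by
    rw [show m+3 = (m+2)+1 from rfl, Nat.factorial_succ, show m+2 = (m+1)+1 from rfl,
      Nat.factorial_succ, Nat.factorial_succ]
    push_cast
    ring
  have F2 : ((m+2).factorial : ℚ) = ((m:ℚ)+2) * ((m:ℚ)+1) * (m.factorial : ℚ) := by
    rw [show m+2 = (m+1)+1 from rfl, Nat.factorial_succ, Nat.factorial_succ]
    push_cast
    ring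
  have F1 : ((m+1).factorial : ℚ) = ((m:ℚ)+1) * (m.factorial : ℚ) := by
    rw [Nat.factorial_succ]
    push_cast
    ring
  rw [F3] at e3
  rw [F2] at e2
  rw [F1] at e1
  push_cast at key
  have hQ : (((m:ℤ)+3) ^ 4 * (f (m+3) : ℚ)
        - (35 * ((m:ℚ)+3) ^ 4 - 70 * ((m:ℚ)+3) ^ 3 + 63 * ((m:ℚ)+3) ^ 2 - 28 * ((m:ℚ)+3) + 5) * (f (m+2) : ℚ)
        + (((m:ℚ)+3) - 1) ^ 2 * (259 * (((m:ℚ)+3) - 1) ^ 2 + 26) * (f (m+1) : ℚ)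
        - 225 * (((m:ℚ)+3) - 1) ^ 2 * (((m:ℚ)+3) - 2) ^ 2 * (f m : ℚ)) = 0 := by
    push_cast
    rw [e3, e2, e1, e0]
    linear_combination ((m.factorial : ℚ))^2 * key
  have := hQ
  push_cast at this
  exact_mod_cast this
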